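/- Let H be a Hilbert space and V, W closed linear subspaces with orthogonal complements V^⊥, W^⊥. Then d_G(V, W) = d_G(V^⊥, W^⊥), where d_G is the Grassmannian (Hausdorff) distance between unit balls of the subspaces. -/

import Mathlib

open Metric

set_option maxHeartbeats 1000000
set_option synthInstance.maxHeartbeats 400000

section Aux

variable {H : Type} [NormedAddCommGroup H] [InnerProductSpace ℝ H] [CompleteSpace H]

private lemma memB (A : Submodule ℝ H) : (0 : H) ∈ (A : Set H) ∩ closedBall 0 1 :=
  ⟨A.zero_mem, by simp⟩

private lemma finB (A B : Submodule ℝ H) :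
    EMetric.hausdorffEdist ((A : Set H) ∩ closedBall 0 1) ((B : Set H) ∩ closedBall 0 1) ≠ ⊤ :=
  hausdorffEdist_ne_top_of_nonempty_of_bounded ⟨0, memB A⟩ ⟨0, memB B⟩
    ((isBounded_closedBall).subset Set.inter_subset_right)
    ((isBounded_closedBall).subset Set.inter_subset_right)

private lemma key (A B : Submodule ℝ H) {v : H} (hv : v ∈ A) (hv1 : ‖v‖ ≤ 1) :
    ‖(Submodule.orthogonalProjectionOnto Bᗮ v : H)‖ ≤
      hausdorffDist ((Aᗮ : Set H) ∩ closedBall 0 1) ((Bᗮ : Set H) ∩ closedBall 0 1) := by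
  set u : H := (Submodule.orthogonalProjectionOnto Bᗮ v : H) with hu
  by_cases h0 : u = 0
  · simpa [h0] using hausdorffDist_nonneg
  have hun : ‖u‖ ≠ 0 := norm_ne_zero_iff.2 h0
  set e : H := ‖u‖⁻¹ • u with he_def
  have he : ‖e‖ = 1 := by
    rw [he_def, norm_smul, norm_inv, norm_norm, inv_mul_cancel₀ hun]
  have huB : u ∈ Bᗮ := (Submodule.orthogonalProjectionOnto Bᗮ v).2
  have heB : e ∈ Bᗮ := Bᗮ.smul_mem _ huB
  have huv : (inner ℝ u v : ℝ) = ‖u‖ ^ 2 := by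
    have h1 : v - u ∈ Bᗮᗮ := Submodule.sub_starProjection_mem_orthogonal (K := Bᗮ) v
    have h2 : (inner ℝ u (v - u) : ℝ) = 0 :=
      (Submodule.mem_orthogonal _ _).1 h1 u huB
    rw [inner_sub_right] at h2
    have h3 : (inner ℝ u u : ℝ) = ‖u‖ ^ 2 := real_inner_self_eq_norm_sq u
    linarith
  have hev : (inner ℝ e v : ℝ) = ‖u‖ := by
    rw [he_def, real_inner_smul_left, huv, sq]
    field_simp
  have hle : ‖u‖ ≤ infDist e ((Aᗮ : Set H) ∩ closedBall 0 1) := by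
    rw [infDist_eq_iInf]
    haveI : Nonempty (((Aᗮ : Set H) ∩ closedBall 0 1 : Set H)) := ⟨⟨0, memB _⟩⟩
    refine le_ciInf fun z => ?_
    obtain ⟨z, hzA, -⟩ := z
    have hz : (inner ℝ z v : ℝ) = 0 := by
      have := (Submodule.mem_orthogonal _ _).1 hzA v hv
      rwa [real_inner_comm] at this
    have h4 : ‖u‖ = (inner ℝ (e - z) v : ℝ) := by
      rw [inner_sub_left, hev, hz, sub_zero]
    calc ‖u‖ = (inner ℝ (e - z) v : ℝ) := h4
      _ ≤ ‖e - z‖ * ‖v‖ := real_inner_le_norm _ _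
      _ ≤ ‖e - z‖ * 1 := mul_le_mul_of_nonneg_left hv1 (norm_nonneg _)
      _ = dist e z := by rw [mul_one, dist_eq_norm]
  have hmem : e ∈ (Bᗮ : Set H) ∩ closedBall 0 1 :=
    ⟨heB, by simp [mem_closedBall_zero_iff, he]⟩
  have h5 : infDist e ((Aᗮ : Set H) ∩ closedBall 0 1) ≤
      hausdorffDist ((Bᗮ : Set H) ∩ closedBall 0 1) ((Aᗮ : Set H) ∩ closedBall 0 1) :=
    infDist_le_hausdorffDist_of_mem hmem (finB _ _)
  rw [hausdorffDist_comm] at h5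
  exact hle.trans h5

private lemma auxle (V W : Submodule ℝ H) (hV : IsClosed (V : Set H))
    (hW : IsClosed (W : Set H)) :
    hausdorffDist ((V : Set H) ∩ closedBall 0 1) ((W : Set H) ∩ closedBall 0 1) ≤
      hausdorffDist ((Vᗮ : Set H) ∩ closedBall 0 1) ((Wᗮ : Set H) ∩ closedBall 0 1) := by
  haveI : CompleteSpace V := hV.completeSpace_coe
  haveI : CompleteSpace W := hW.completeSpace_coe
  refine hausdorffDist_le_of_infDist hausdorffDist_nonneg ?_ ?_
  · rintro v ⟨hvV, hv1⟩
    rw [mem_closedBall_zero_iff] at hv1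
    have hproj : (Submodule.orthogonalProjectionOnto W v : H) ∈ (W : Set H) ∩ closedBall 0 1 := by
      refine ⟨(Submodule.orthogonalProjectionOnto W v).2, mem_closedBall_zero_iff.2 ?_⟩
      calc ‖(Submodule.orthogonalProjectionOnto W v : H)‖ ≤ ‖Submodule.orthogonalProjectionOnto W‖ * ‖v‖ :=
            (Submodule.orthogonalProjectionOnto W).le_opNorm v
        _ ≤ 1 * 1 := mul_le_mul (Submodule.orthogonalProjectionOnto_norm_le W) hv1 (norm_nonneg _)
            zero_le_one
        _ = 1 := one_mul 1
    have h1 : infDist v ((W : Set H) ∩ closedBall 0 1) ≤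
        ‖(Submodule.orthogonalProjectionOnto Wᗮ v : H)‖ := by
      have := infDist_le_dist_of_mem (x := v) hproj
      rwa [dist_eq_norm, ← Submodule.starProjection_apply, ← Submodule.starProjection_orthogonal_val,
        Submodule.starProjection_apply] at this
    exact h1.trans (key V W hvV hv1)
  · rintro w ⟨hwW, hw1⟩
    rw [mem_closedBall_zero_iff] at hw1
    have hproj : (Submodule.orthogonalProjectionOnto V w : H) ∈ (V : Set H) ∩ closedBall 0 1 := by
      refine ⟨(Submodule.orthogonalProjectionOnto V w).2, mem_closedBall_zero_iff.2 ?_⟩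
      calc ‖(Submodule.orthogonalProjectionOnto V w : H)‖ ≤ ‖Submodule.orthogonalProjectionOnto V‖ * ‖w‖ :=
            (Submodule.orthogonalProjectionOnto V).le_opNorm w
        _ ≤ 1 * 1 := mul_le_mul (Submodule.orthogonalProjectionOnto_norm_le V) hw1 (norm_nonneg _)
            zero_le_one
        _ = 1 := one_mul 1
    have h1 : infDist w ((V : Set H) ∩ closedBall 0 1) ≤
        ‖(Submodule.orthogonalProjectionOnto Vᗮ w : H)‖ := by
      have := infDist_le_dist_of_mem (x := w) hproj
      rwa [dist_eq_norm, ← Submodule.starProjection_apply, ← Submodule.starProjection_orthogonal_val,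
        Submodule.starProjection_apply] at this
    have h2 := key W V hwW hw1
    rw [hausdorffDist_comm] at h2
    exact h1.trans h2

end Aux

/-- In a Hilbert space, the Grassmannian distance between two closed subspaces
equals the Grassmannian distance between their orthogonal complements. -/
theorem grassDist_orthogonal_complements {H : Type} [NormedAddCommGroup H]
    [InnerProductSpace ℝ H] [CompleteSpace H]
    (V W : Submodule ℝ H) (hV : IsClosed (V : Set H)) (hW : IsClosed (W : Set H)) :
    hausdorffDist ((V : Set H) ∩ closedBall 0 1) ((W : Set H) ∩ closedBall 0 1) =
      hausdorffDist ((Vᗮ : Set H) ∩ closedBall 0 1)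
        ((Wᗮ : Set H) ∩ closedBall 0 1) := by
  haveI : CompleteSpace V := hV.completeSpace_coe
  haveI : CompleteSpace W := hW.completeSpace_coe
  refine le_antisymm (auxle V W hV hW) ?_
  have h := auxle Vᗮ Wᗮ (Submodule.isClosed_orthogonal V) (Submodule.isClosed_orthogonal W)
  rwa [Submodule.orthogonal_orthogonal V, Submodule.orthogonal_orthogonal W] at h
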